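/- In a connected non-bipartite graph, for any two non-adjacent vertices i and j there exists a finite word y over the vertex set of even total length |ij y| such that the FCFM matching of y alone is perfect and the FCFM matching of the word i j y is also perfect (y is an erasing word of ij). -/

import Mathlib

variable {V : Type*} [Fintype V] [DecidableEq V]

/-- One step of First Come, First Matched. -/
def fcfmStep (G : SimpleGraph V) [DecidableRel G.Adj] (w : List V) (v : V) : List V :=
  match w.findIdx? (fun u => decide (G.Adj u v)) with
  | some k => w.eraseIdx k
  | none => w ++ [v]

/-- Buffer content after processing `z` under FCFM from an empty system. -/
def fcfmQ (G : SimpleGraph V) [DecidableRel G.Adj] (z : List V) : List V :=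
  z.foldl (fcfmStep G) []

section Aux
variable (G : SimpleGraph V) [DecidableRel G.Adj]

/-- Erasing-word property for a pair. -/
def FcfmP (u v : V) : Prop :=
  ∃ y : List V, Even y.length ∧ fcfmQ G y = [] ∧ fcfmQ G (u :: v :: y) = []

variable {G}

lemma fcfmStep_nil (v : V) : fcfmStep G [] v = [v] := by
  simp [fcfmStep]

lemma fcfmStep_single_adj {u v : V} (h : G.Adj u v) : fcfmStep G [u] v = [] := by
  simp [fcfmStep, List.findIdx?, List.findIdx?.go, h]

lemma fcfmStep_single_not_adj {u v : V} (h : ¬ G.Adj u v) : fcfmStep G [u] v = [u, v] := by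
  simp [fcfmStep, List.findIdx?, List.findIdx?.go, h]

lemma fcfmStep_pair_adj_left {u v a : V} (h : G.Adj u a) :
    fcfmStep G [u, v] a = [v] := by
  simp [fcfmStep, List.findIdx?, List.findIdx?.go, h]

lemma fcfmP_of_adj {u v : V} (h : G.Adj u v) : FcfmP G u v :=
  ⟨[], by simp, by simp [fcfmQ], by
    simp [fcfmQ, List.foldl, fcfmStep_nil, fcfmStep_single_adj h]⟩

lemma fcfmP_step {u v a b : V} (hua : G.Adj u a) (hvb : G.Adj v b)
    (h : FcfmP G a b) : FcfmP G u v := by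
  obtain ⟨y, hy, hy1, hy2⟩ := h
  refine ⟨a :: b :: y, by obtain ⟨k, hk⟩ := hy; exact ⟨k + 1, by simp [hk]; omega⟩, hy2, ?_⟩
  by_cases huv : G.Adj u v
  · have : fcfmQ G (u :: v :: a :: b :: y) = fcfmQ G (a :: b :: y) := by
      simp [fcfmQ, List.foldl, fcfmStep_nil, fcfmStep_single_adj huv]
    rw [this]; exact hy2
  · have : fcfmQ G (u :: v :: a :: b :: y) = fcfmQ G y := by
      simp [fcfmQ, List.foldl, fcfmStep_nil, fcfmStep_single_not_adj huv,
        fcfmStep_pair_adj_left hua, fcfmStep_single_adj hvb]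
    rw [this]; exact hy1

lemma fcfmP_of_oddWalk : ∀ (n : ℕ) (u v : V) (w : G.Walk u v),
    w.length = n → Odd n → FcfmP G u v := by
  intro n
  induction n using Nat.strong_induction_on with
  | _ n ih =>
    intro u v w hl hodd
    cases w with
    | nil => rw [Nat.odd_iff] at hodd; simp at hl; omega
    | @cons _ p1 _ h w1 =>
      cases hw : w1.reverse with
      | nil =>
        exact fcfmP_of_adj h
      | @cons _ b _ h2 w2 =>
        have hlen : w2.length = n - 2 := by
          have := congrArg SimpleGraph.Walk.length hw
          simp at this hl
          omega
        have hn2 : n - 2 < n := by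
          have := congrArg SimpleGraph.Walk.length hw
          simp at this hl
          omega
        have hodd2 : Odd (n - 2) := by
          obtain ⟨k, hk⟩ := hodd
          have := congrArg SimpleGraph.Walk.length hw
          simp at this hl
          exact ⟨k - 1, by omega⟩
        exact fcfmP_step h h2 (ih (n - 2) hn2 p1 b w2.reverse (by simpa using hlen) hodd2)

lemma exists_odd_closed_walk (hconn : G.Connected) (hnb : ¬ G.Colorable 2) (r : V) :
    ∃ w : G.Walk r r, Odd w.length := by
  by_contra hcon
  push_neg at hcon
  -- then parity-of-distance is a proper 2-coloring
  apply hnb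
  refine ⟨SimpleGraph.Coloring.mk (fun v => (⟨G.dist r v % 2, by omega⟩ : Fin 2)) ?_⟩
  intro a b hab hEq
  have hEq' : G.dist r a % 2 = G.dist r b % 2 := by
    simpa [Fin.ext_iff] using hEq
  obtain ⟨p, hp⟩ := (hconn r a).exists_walk_length_eq_dist
  obtain ⟨q, hq⟩ := (hconn r b).exists_walk_length_eq_dist
  have := hcon (p.append ((SimpleGraph.Walk.cons hab SimpleGraph.Walk.nil).append q.reverse))
  rw [Nat.odd_iff] at this
  simp [SimpleGraph.Walk.length_append, hp, hq] at this
  omega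

lemma exists_odd_walk (hconn : G.Connected) (hnb : ¬ G.Colorable 2) (u v : V) :
    ∃ w : G.Walk u v, Odd w.length := by
  obtain ⟨r⟩ := hconn.nonempty
  obtain ⟨c, hc⟩ := exists_odd_closed_walk hconn hnb r
  obtain ⟨p⟩ := hconn u r
  obtain ⟨q⟩ := hconn r v
  rcases Nat.even_or_odd (p.length + q.length) with he | ho
  · refine ⟨p.append (c.append q), ?_⟩
    rw [Nat.odd_iff] at hc ⊢
    rw [Nat.even_iff] at he
    simp [SimpleGraph.Walk.length_append]
    omega
  · refine ⟨p.append q, ?_⟩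
    rw [Nat.odd_iff] at ho ⊢
    simpa [SimpleGraph.Walk.length_append] using ho

end Aux

theorem exists_fcfm_erasing_word (G : SimpleGraph V) [DecidableRel G.Adj]
    (hconn : G.Connected) (hnb : ¬ G.Colorable 2)
    (i j : V) (hij : ¬ G.Adj i j) :
    ∃ y : List V, Even (([i, j] ++ y).length) ∧
      fcfmQ G y = [] ∧ fcfmQ G ([i, j] ++ y) = [] := by
  obtain ⟨w, hw⟩ := exists_odd_walk hconn hnb i j
  obtain ⟨y, hy, hy1, hy2⟩ := fcfmP_of_oddWalk w.length i j w rfl hw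
  refine ⟨y, ?_, hy1, by simpa using hy2⟩
  obtain ⟨k, hk⟩ := hy
  exact ⟨k + 1, by simp [hk]; omega⟩
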